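/- Let n and t be natural numbers with 3 ≤ t ≤ n and n ≥ 7. Then λ₁(M_{n,t}) is the largest real root of the polynomial g_{n,t}(x) = x³ − (n−3)x² − (n+t−3)x − t² + (n+4)t − n − 7; in particular g_{n,t}(λ₁(M_{n,t})) = 0 and every real root of g_{n,t} is at most λ₁(M_{n,t}). -/

import Mathlib

open Matrix

/-- The largest eigenvalue of a real matrix (for symmetric matrices this is λ₁). -/
noncomputable def lam1 {n : ℕ} (A : Matrix (Fin n) (Fin n) ℝ) : ℝ :=
  sSup {μ : ℝ | ∃ v : Fin n → ℝ, v ≠ 0 ∧ A.mulVec v = μ • v}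

/-- `A` is the adjacency matrix of a signed graph: symmetric, zero diagonal,
entries in {-1,0,1}. -/
def IsSignedAdj {n : ℕ} (A : Matrix (Fin n) (Fin n) ℝ) : Prop :=
  A.IsSymm ∧ (∀ i, A i i = 0) ∧ ∀ i j, A i j = -1 ∨ A i j = 0 ∨ A i j = 1

/-- A signed graph is balanced if a global sign switching makes all edges positive. -/
def IsBalanced {n : ℕ} (A : Matrix (Fin n) (Fin n) ℝ) : Prop :=
  ∃ s : Fin n → ℝ, (∀ i, s i = -1 ∨ s i = 1) ∧ ∀ i j, 0 ≤ s i * A i j * s j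

/-- Every fully present copy of K_{3,3} is balanced. -/
def K33Free {n : ℕ} (A : Matrix (Fin n) (Fin n) ℝ) : Prop :=
  ∀ a₁ a₂ a₃ b₁ b₂ b₃ : Fin n,
    [a₁, a₂, a₃, b₁, b₂, b₃].Nodup →
    (∀ a ∈ [a₁, a₂, a₃], ∀ b ∈ [b₁, b₂, b₃], A a b ≠ 0) →
    ∀ a ∈ [a₁, a₂, a₃], ∀ a' ∈ [a₁, a₂, a₃], ∀ b ∈ [b₁, b₂, b₃], ∀ b' ∈ [b₁, b₂, b₃],
      A a b * A a b' * A a' b * A a' b' = 1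

/-- Switching isomorphism of signed adjacency matrices. -/
def SwitchIso {n : ℕ} (A B : Matrix (Fin n) (Fin n) ℝ) : Prop :=
  ∃ σ : Equiv.Perm (Fin n), ∃ s : Fin n → ℝ, (∀ i, s i = -1 ∨ s i = 1) ∧
    ∀ i j, B i j = s i * s j * A (σ i) (σ j)

/-- Adjacency matrix of Γ_{n,t}: vertex 0 is u, vertices 1,…,n-1 form an
all-positive K_{n-1}; u is adjacent to 1,…,t-1, with u1 the unique negative edge. -/
noncomputable def Mnt (n t : ℕ) : Matrix (Fin n) (Fin n) ℝ :=
  Matrix.of fun i j =>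
    if i = j then 0
    else if (i : ℕ) = 0 then (if (j : ℕ) = 1 then -1 else if (j : ℕ) < t then 1 else 0)
    else if (j : ℕ) = 0 then (if (i : ℕ) = 1 then -1 else if (i : ℕ) < t then 1 else 0)
    else 1


section AUX
open Finset
noncomputable def entf (t : ℕ) (a b : ℕ) : ℝ :=
  if a = b then 0
  else if a = 0 then (if b = 1 then -1 else if b < t then 1 else 0)
  else if b = 0 then (if a = 1 then -1 else if a < t then 1 else 0)
  else 1

lemma Mnt_apply {n : ℕ} (t : ℕ) (i j : Fin n) : Mnt n t i j = entf t i j := by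
  simp [Mnt, entf, Fin.ext_iff]

section rows
variable {n t : ℕ} (h3 : 3 ≤ t) (htn : t ≤ n)
variable {a b c d : ℝ} {V : ℕ → ℝ}
variable (hV0 : V 0 = a) (hV1 : V 1 = b)
  (hVS : ∀ j, 2 ≤ j → j < t → V j = c) (hVT : ∀ j, t ≤ j → j < n → V j = d)

lemma sum_const_on {s : Finset ℕ} {f : ℕ → ℝ} {c : ℝ} (h : ∀ j ∈ s, f j = c) :
    ∑ j ∈ s, f j = s.card * c := by
  rw [Finset.sum_congr rfl h, Finset.sum_const, nsmul_eq_mul]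

lemma sum_const_on_except {s : Finset ℕ} {f : ℕ → ℝ} {c : ℝ} {i : ℕ} (hi : i ∈ s)
    (h0 : f i = 0) (h : ∀ j ∈ s, j ≠ i → f j = c) :
    ∑ j ∈ s, f j = s.card * c - c := by
  have key : ∀ j ∈ s, f j = c - (if j = i then c else 0) := by
    intro j hj
    by_cases hji : j = i
    · subst hji; simp [h0]
    · simp [hji, h j hj hji]
  rw [Finset.sum_congr rfl key, Finset.sum_sub_distrib,
    Finset.sum_ite_eq' s i (fun _ => c), if_pos hi, Finset.sum_const, nsmul_eq_mul]

lemma sum_split (h3' : 3 ≤ t) (htn' : t ≤ n) (f : ℕ → ℝ) :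
    ∑ j ∈ Finset.range n, f j =
      (f 0 + f 1) + ∑ j ∈ Finset.Ico 2 t, f j + ∑ j ∈ Finset.Ico t n, f j := by
  rw [Finset.range_eq_Ico,
    ← Finset.sum_Ico_consecutive f (by omega : (0:ℕ) ≤ 2) (by omega : 2 ≤ n),
    ← Finset.sum_Ico_consecutive f (by omega : (2:ℕ) ≤ t) htn']
  have : ∑ j ∈ Finset.Ico 0 2, f j = f 0 + f 1 := by
    rw [← Finset.range_eq_Ico]; simp [Finset.sum_range_succ]
  rw [this]; ring

include h3 htn hV0 hV1 hVS hVT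

lemma row0 : ∑ j ∈ Finset.range n, entf t 0 j * V j = -b + ((t:ℝ) - 2) * c := by
  rw [sum_split h3 htn]
  have e0 : entf t 0 0 * V 0 = 0 := by unfold entf; split_ifs <;> first | ring1 | (exfalso; omega) | (exfalso; simp_all)
  have e1 : entf t 0 1 * V 1 = -b := by
    have : entf t 0 1 = -1 := by unfold entf; split_ifs <;> first | rfl | (exfalso; omega) | (exfalso; simp_all)
    rw [this, hV1]; ring
  have eS : ∑ j ∈ Finset.Ico 2 t, entf t 0 j * V j = (Finset.Ico 2 t).card * c := by
    apply sum_const_on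
    intro j hj; rw [Finset.mem_Ico] at hj
    have : entf t 0 j = 1 := by unfold entf; split_ifs <;> first | rfl | (exfalso; omega) | (exfalso; simp_all)
    rw [this, hVS j hj.1 hj.2]; ring
  have eT : ∑ j ∈ Finset.Ico t n, entf t 0 j * V j = (Finset.Ico t n).card * 0 := by
    apply sum_const_on
    intro j hj; rw [Finset.mem_Ico] at hj
    have : entf t 0 j = 0 := by unfold entf; split_ifs <;> first | rfl | (exfalso; omega) | (exfalso; simp_all)
    rw [this]; ring
  rw [e0, e1, eS, eT, Nat.card_Ico]
  have : ((t - 2 : ℕ) : ℝ) = (t:ℝ) - 2 := by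
    rw [Nat.cast_sub (by omega)]; norm_num
  rw [this]; ring

lemma row1 : ∑ j ∈ Finset.range n, entf t 1 j * V j
    = -a + ((t:ℝ) - 2) * c + ((n:ℝ) - t) * d := by
  rw [sum_split h3 htn]
  have e0 : entf t 1 0 * V 0 = -a := by
    have : entf t 1 0 = -1 := by unfold entf; split_ifs <;> first | rfl | (exfalso; omega) | (exfalso; simp_all)
    rw [this, hV0]; ring
  have e1 : entf t 1 1 * V 1 = 0 := by
    unfold entf; split_ifs <;> first | ring1 | (exfalso; omega) | (exfalso; simp_all)
  have eS : ∑ j ∈ Finset.Ico 2 t, entf t 1 j * V j = (Finset.Ico 2 t).card * c := by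
    apply sum_const_on
    intro j hj; rw [Finset.mem_Ico] at hj
    have : entf t 1 j = 1 := by unfold entf; split_ifs <;> first | rfl | (exfalso; omega) | (exfalso; simp_all)
    rw [this, hVS j hj.1 hj.2]; ring
  have eT : ∑ j ∈ Finset.Ico t n, entf t 1 j * V j = (Finset.Ico t n).card * d := by
    apply sum_const_on
    intro j hj; rw [Finset.mem_Ico] at hj
    have : entf t 1 j = 1 := by unfold entf; split_ifs <;> first | rfl | (exfalso; omega) | (exfalso; simp_all)
    rw [this, hVT j hj.1 hj.2]; ring
  rw [e0, e1, eS, eT, Nat.card_Ico, Nat.card_Ico]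
  rw [Nat.cast_sub (by omega : 2 ≤ t), Nat.cast_sub htn]
  push_cast; ring

lemma rowS {i : ℕ} (hi2 : 2 ≤ i) (hit : i < t) :
    ∑ j ∈ Finset.range n, entf t i j * V j
      = a + b + ((t:ℝ) - 3) * c + ((n:ℝ) - t) * d := by
  rw [sum_split h3 htn]
  have e0 : entf t i 0 * V 0 = a := by
    have : entf t i 0 = 1 := by unfold entf; split_ifs <;> first | rfl | (exfalso; omega) | (exfalso; simp_all)
    rw [this, hV0]; ring
  have e1 : entf t i 1 * V 1 = b := by
    have : entf t i 1 = 1 := by unfold entf; split_ifs <;> first | rfl | (exfalso; omega) | (exfalso; simp_all)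
    rw [this, hV1]; ring
  have eS : ∑ j ∈ Finset.Ico 2 t, entf t i j * V j = (Finset.Ico 2 t).card * c - c := by
    apply sum_const_on_except (i := i) (by rw [Finset.mem_Ico]; omega)
    · have : entf t i i = 0 := by unfold entf; split_ifs <;> first | rfl | (exfalso; omega) | (exfalso; simp_all)
      rw [this]; ring
    · intro j hj hji; rw [Finset.mem_Ico] at hj
      have : entf t i j = 1 := by unfold entf; split_ifs <;> first | rfl | (exfalso; omega) | (exfalso; simp_all)
      rw [this, hVS j hj.1 hj.2]; ring
  have eT : ∑ j ∈ Finset.Ico t n, entf t i j * V j = (Finset.Ico t n).card * d := by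
    apply sum_const_on
    intro j hj; rw [Finset.mem_Ico] at hj
    have : entf t i j = 1 := by unfold entf; split_ifs <;> first | rfl | (exfalso; omega) | (exfalso; simp_all)
    rw [this, hVT j hj.1 hj.2]; ring
  rw [e0, e1, eS, eT, Nat.card_Ico, Nat.card_Ico]
  rw [Nat.cast_sub (by omega : 2 ≤ t), Nat.cast_sub htn]
  push_cast; ring

lemma rowT {i : ℕ} (hit : t ≤ i) (hin : i < n) :
    ∑ j ∈ Finset.range n, entf t i j * V j
      = b + ((t:ℝ) - 2) * c + ((n:ℝ) - t - 1) * d := by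
  rw [sum_split h3 htn]
  have e0 : entf t i 0 * V 0 = 0 := by
    have : entf t i 0 = 0 := by unfold entf; split_ifs <;> first | rfl | (exfalso; omega) | (exfalso; simp_all)
    rw [this]; ring
  have e1 : entf t i 1 * V 1 = b := by
    have : entf t i 1 = 1 := by unfold entf; split_ifs <;> first | rfl | (exfalso; omega) | (exfalso; simp_all)
    rw [this, hV1]; ring
  have eS : ∑ j ∈ Finset.Ico 2 t, entf t i j * V j = (Finset.Ico 2 t).card * c := by
    apply sum_const_on
    intro j hj; rw [Finset.mem_Ico] at hj
    have : entf t i j = 1 := by unfold entf; split_ifs <;> first | rfl | (exfalso; omega) | (exfalso; simp_all)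
    rw [this, hVS j hj.1 hj.2]; ring
  have eT : ∑ j ∈ Finset.Ico t n, entf t i j * V j = (Finset.Ico t n).card * d - d := by
    apply sum_const_on_except (i := i) (by rw [Finset.mem_Ico]; omega)
    · have : entf t i i = 0 := by unfold entf; split_ifs <;> first | rfl | (exfalso; omega) | (exfalso; simp_all)
      rw [this]; ring
    · intro j hj hji; rw [Finset.mem_Ico] at hj
      have : entf t i j = 1 := by unfold entf; split_ifs <;> first | rfl | (exfalso; omega) | (exfalso; simp_all)
      rw [this, hVT j hj.1 hj.2]; ring
  rw [e0, e1, eS, eT, Nat.card_Ico, Nat.card_Ico]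
  rw [Nat.cast_sub (by omega : 2 ≤ t), Nat.cast_sub htn]
  push_cast; ring

end rows
noncomputable def gfun (n t : ℕ) (x : ℝ) : ℝ :=
  x ^ 3 - ((n : ℝ) - 3) * x ^ 2 - ((n : ℝ) + (t : ℝ) - 3) * x
    - (t : ℝ) ^ 2 + ((n : ℝ) + 4) * (t : ℝ) - (n : ℝ) - 7

noncomputable def B4 (n t : ℕ) (x : ℝ) : Matrix (Fin 4) (Fin 4) ℝ :=
  !![-x, -1, (t:ℝ)-2, 0;
     -1, -x, (t:ℝ)-2, (n:ℝ)-t;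
     1, 1, (t:ℝ)-3-x, (n:ℝ)-t;
     0, 1, (t:ℝ)-2, (n:ℝ)-t-1-x]

noncomputable def B3 (n t : ℕ) (x : ℝ) : Matrix (Fin 3) (Fin 3) ℝ :=
  !![-x, -1, (t:ℝ)-2;
     -1, -x, (t:ℝ)-2;
     1, 1, (t:ℝ)-3-x]

lemma detB4 (n t : ℕ) (x : ℝ) : (B4 n t x).det = (x + 1) * gfun n t x := by
  rw [Matrix.det_succ_row_zero]
  simp [B4, gfun, Fin.sum_univ_succ, Matrix.det_fin_three, Matrix.submatrix,
    (by decide : Fin.succAbove (1 : Fin 4) (2 : Fin 3) = 3),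
    (by decide : Fin.succAbove (2 : Fin 4) (2 : Fin 3) = 3)]
  ring

lemma detB3 (n t : ℕ) (h : t = n) (x : ℝ) : (B3 n t x).det = - gfun n t x := by
  subst h
  rw [Matrix.det_fin_three]
  simp [B3, gfun]
  ring

section main
variable {n t : ℕ}

/-- the eigenvalue set -/
def ESet (n t : ℕ) : Set ℝ := {μ : ℝ | ∃ v : Fin n → ℝ, v ≠ 0 ∧ (Mnt n t).mulVec v = μ • v}

lemma mulVec_eq_sum (v : Fin n → ℝ) (V : ℕ → ℝ) (hv : ∀ j : Fin n, v j = V (j : ℕ))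
    (i : Fin n) :
    (Mnt n t).mulVec v i = ∑ j ∈ Finset.range n, entf t (i : ℕ) j * V j := by
  simp only [Matrix.mulVec, dotProduct]
  rw [← Fin.sum_univ_eq_sum_range (fun j => entf t (i : ℕ) j * V j) n]
  exact Finset.sum_congr rfl fun j _ => by rw [Mnt_apply, hv j]

lemma root_mem_ESet (h3 : 3 ≤ t) (htn : t ≤ n) (hn : 7 ≤ n) (x : ℝ)
    (hx : gfun n t x = 0) : x ∈ ESet n t := by
  rcases eq_or_lt_of_le htn with htn' | htn'
  · -- t = n : use B3
    have hdet : (B3 n t x).det = 0 := by rw [detB3 n t htn', hx, neg_zero]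
    obtain ⟨w, hw0, hw⟩ := (Matrix.exists_mulVec_eq_zero_iff).mpr hdet
    set a := w 0 with ha; set b := w 1 with hb; set c := w 2 with hc
    have E1 : -x * a + -1 * b + ((t:ℝ) - 2) * c = 0 := by
      have := congrFun hw 0
      simpa [B3, Matrix.mulVec, dotProduct, Fin.sum_univ_three] using this
    have E2 : -1 * a + -x * b + ((t:ℝ) - 2) * c = 0 := by
      have := congrFun hw 1
      simpa [B3, Matrix.mulVec, dotProduct, Fin.sum_univ_three] using this
    have E3 : 1 * a + 1 * b + ((t:ℝ) - 3 - x) * c = 0 := by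
      have := congrFun hw 2
      simpa [B3, Matrix.mulVec, dotProduct, Fin.sum_univ_three] using this
    set V : ℕ → ℝ := fun j => if j = 0 then a else if j = 1 then b else if j < t then c else 0
      with hV
    have hV0 : V 0 = a := by simp [hV]
    have hV1 : V 1 = b := by simp [hV]
    have hVS : ∀ j, 2 ≤ j → j < t → V j = c := by
      intro j h2 hjt; simp only [hV]
      rw [if_neg (by omega), if_neg (by omega), if_pos hjt]
    have hVT : ∀ j, t ≤ j → j < n → V j = 0 := fun j h1 h2 => absurd (by omega) (by omega : ¬ j < j)
    refine ⟨fun j => V (j : ℕ), ?_, ?_⟩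
    · intro hzero
      have hz : ∀ j : Fin n, V (j : ℕ) = 0 := fun j => congrFun hzero j
      apply hw0
      funext k
      fin_cases k
      · have := hz ⟨0, by omega⟩; rw [hV0] at this; simpa using this
      · have := hz ⟨1, by omega⟩; rw [hV1] at this; simpa using this
      · have := hz ⟨2, by omega⟩; rw [hVS 2 le_rfl (by omega)] at this; simpa using this
    · funext i
      rw [mulVec_eq_sum _ V (fun j => rfl) i]
      have hcase : (i : ℕ) = 0 ∨ (i : ℕ) = 1 ∨ (2 ≤ (i : ℕ) ∧ (i : ℕ) < t) := by
        have := i.isLt; omega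
      rcases hcase with h0 | h1 | ⟨hs2, hst⟩
      · rw [h0, row0 h3 htn hV0 hV1 hVS hVT]
        simp only [Pi.smul_apply, smul_eq_mul, h0, hV0]
        linarith
      · rw [h1, row1 h3 htn hV0 hV1 hVS hVT]
        simp only [Pi.smul_apply, smul_eq_mul, h1, hV1]
        rw [htn'] at *
        linarith
      · rw [rowS h3 htn hV0 hV1 hVS hVT hs2 hst]
        simp only [Pi.smul_apply, smul_eq_mul, hVS _ hs2 hst]
        rw [htn'] at *
        linarith
  · -- t < n : use B4
    have hdet : (B4 n t x).det = 0 := by rw [detB4, hx, mul_zero]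
    obtain ⟨w, hw0, hw⟩ := (Matrix.exists_mulVec_eq_zero_iff).mpr hdet
    set a := w 0 with ha; set b := w 1 with hb; set c := w 2 with hc; set d := w 3 with hd
    have E1 : -x * a + -1 * b + ((t:ℝ) - 2) * c + 0 * d = 0 := by
      have := congrFun hw 0
      simpa [B4, Matrix.mulVec, dotProduct, Fin.sum_univ_four] using this
    have E2 : -1 * a + -x * b + ((t:ℝ) - 2) * c + ((n:ℝ) - t) * d = 0 := by
      have := congrFun hw 1
      simpa [B4, Matrix.mulVec, dotProduct, Fin.sum_univ_four] using this
    have E3 : 1 * a + 1 * b + ((t:ℝ) - 3 - x) * c + ((n:ℝ) - t) * d = 0 := by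
      have := congrFun hw 2
      simpa [B4, Matrix.mulVec, dotProduct, Fin.sum_univ_four] using this
    have E4 : 0 * a + 1 * b + ((t:ℝ) - 2) * c + ((n:ℝ) - t - 1 - x) * d = 0 := by
      have := congrFun hw 3
      simpa [B4, Matrix.mulVec, dotProduct, Fin.sum_univ_four] using this
    set V : ℕ → ℝ := fun j => if j = 0 then a else if j = 1 then b else if j < t then c else d
      with hV
    have hV0 : V 0 = a := by simp [hV]
    have hV1 : V 1 = b := by simp [hV]
    have hVS : ∀ j, 2 ≤ j → j < t → V j = c := by
      intro j h2 hjt; simp only [hV]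
      rw [if_neg (by omega), if_neg (by omega), if_pos hjt]
    have hVT : ∀ j, t ≤ j → j < n → V j = d := by
      intro j h1 h2; simp only [hV]
      rw [if_neg (by omega), if_neg (by omega), if_neg (by omega)]
    refine ⟨fun j => V (j : ℕ), ?_, ?_⟩
    · intro hzero
      have hz : ∀ j : Fin n, V (j : ℕ) = 0 := fun j => congrFun hzero j
      apply hw0
      funext k
      fin_cases k
      · have := hz ⟨0, by omega⟩; rw [hV0] at this; simpa using this
      · have := hz ⟨1, by omega⟩; rw [hV1] at this; simpa using this
      · have := hz ⟨2, by omega⟩; rw [hVS 2 le_rfl (by omega)] at this; simpa using this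
      · have := hz ⟨t, by omega⟩; rw [hVT t le_rfl (by omega)] at this; simpa using this
    · funext i
      rw [mulVec_eq_sum _ V (fun j => rfl) i]
      have hcase : (i : ℕ) = 0 ∨ (i : ℕ) = 1 ∨ (2 ≤ (i : ℕ) ∧ (i : ℕ) < t)
          ∨ (t ≤ (i : ℕ) ∧ (i : ℕ) < n) := by
        have := i.isLt; omega
      rcases hcase with h0 | h1 | ⟨hs2, hst⟩ | ⟨ht1, ht2⟩
      · rw [h0, row0 h3 htn hV0 hV1 hVS hVT]
        simp only [Pi.smul_apply, smul_eq_mul, h0, hV0]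
        linarith
      · rw [h1, row1 h3 htn hV0 hV1 hVS hVT]
        simp only [Pi.smul_apply, smul_eq_mul, h1, hV1]
        linarith
      · rw [rowS h3 htn hV0 hV1 hVS hVT hs2 hst]
        simp only [Pi.smul_apply, smul_eq_mul, hVS _ hs2 hst]
        linarith
      · rw [rowT h3 htn hV0 hV1 hVS hVT ht1 ht2]
        simp only [Pi.smul_apply, smul_eq_mul, hVT _ ht1 ht2]
        linarith

end main

section dirB
variable {n t : ℕ}

set_option maxHeartbeats 1000000 in
lemma eigen_dichotomy (h3 : 3 ≤ t) (htn : t ≤ n) (hn : 7 ≤ n) (μ : ℝ)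
    (hμ : μ ∈ ESet n t) : μ = -1 ∨ gfun n t μ = 0 := by
  by_cases hμ1 : μ = -1
  · exact Or.inl hμ1
  right
  obtain ⟨v, hv0, hMv⟩ := hμ
  have hμ1' : μ + 1 ≠ 0 := fun h => hμ1 (by linarith)
  have h0n : (0:ℕ) < n := by omega
  have h1n : (1:ℕ) < n := by omega
  have h2n : (2:ℕ) < n := by omega
  set i0 : Fin n := ⟨0, h0n⟩ with hi0def
  set i1 : Fin n := ⟨1, h1n⟩ with hi1def
  set i2 : Fin n := ⟨2, h2n⟩ with hi2def
  set Sv := ∑ j : Fin n, v j with hSv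
  set a := v i0 with ha
  set b := v i1 with hbdef
  have hmu : ∀ i : Fin n, (Mnt n t).mulVec v i = μ * v i := by
    intro i; rw [hMv]; simp
  -- S rows
  have hSrow : ∀ i : Fin n, 2 ≤ (i : ℕ) → (i : ℕ) < t →
      (Mnt n t).mulVec v i = Sv - v i := by
    intro i his hit
    have hM : ∀ j : Fin n, Mnt n t i j * v j = v j - (if j = i then v j else 0) := by
      intro j
      by_cases hji : j = i
      · subst hji
        have hz : Mnt n t j j = 0 := by
          rw [Mnt_apply]; unfold entf
          split_ifs <;> first | rfl | (exfalso; omega) | (exfalso; simp_all)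
        rw [hz, if_pos rfl]; ring
      · have hne : (j : ℕ) ≠ (i : ℕ) := fun h => hji (Fin.ext h)
        have h1 : Mnt n t i j = 1 := by
          rw [Mnt_apply]; unfold entf
          split_ifs <;> first | rfl | (exfalso; omega) | (exfalso; simp_all)
        rw [h1, if_neg hji]; ring
    calc (Mnt n t).mulVec v i = ∑ j : Fin n, Mnt n t i j * v j := by
          simp [Matrix.mulVec, dotProduct]
      _ = ∑ j : Fin n, (v j - (if j = i then v j else 0)) :=
          Finset.sum_congr rfl fun j _ => hM j
      _ = Sv - v i := by
          rw [Finset.sum_sub_distrib, Finset.sum_ite_eq' Finset.univ i v,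
            if_pos (Finset.mem_univ i)]
  -- T rows
  have hTrow : ∀ i : Fin n, t ≤ (i : ℕ) →
      (Mnt n t).mulVec v i = Sv - v i - a := by
    intro i hit
    have hii0 : i ≠ i0 := by
      intro h; rw [h] at hit; simp [hi0def] at hit; omega
    have hM : ∀ j : Fin n, Mnt n t i j * v j
        = v j - (if j = i then v j else 0) - (if j = i0 then v j else 0) := by
      intro j
      by_cases hji : j = i
      · subst hji
        have hz : Mnt n t j j = 0 := by
          rw [Mnt_apply]; unfold entf
          split_ifs <;> first | rfl | (exfalso; omega) | (exfalso; simp_all)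
        rw [hz, if_pos rfl, if_neg hii0]; ring
      · by_cases hj0 : j = i0
        · have hval : (j : ℕ) = 0 := by rw [hj0]
          have hz : Mnt n t i j = 0 := by
            rw [Mnt_apply]; unfold entf
            split_ifs <;> first | rfl | (exfalso; omega) | (exfalso; simp_all)
          rw [hz, if_neg hji, if_pos hj0]; ring
        · have hne : (j : ℕ) ≠ (i : ℕ) := fun h => hji (Fin.ext h)
          have hne0 : (j : ℕ) ≠ 0 := by
            intro h; exact hj0 (Fin.ext (by simpa [hi0def] using h))
          have h1 : Mnt n t i j = 1 := by
            rw [Mnt_apply]; unfold entf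
            split_ifs <;> first | rfl | (exfalso; omega) | (exfalso; simp_all)
          rw [h1, if_neg hji, if_neg hj0]; ring
    calc (Mnt n t).mulVec v i = ∑ j : Fin n, Mnt n t i j * v j := by
          simp [Matrix.mulVec, dotProduct]
      _ = ∑ j : Fin n, (v j - (if j = i then v j else 0) - (if j = i0 then v j else 0)) :=
          Finset.sum_congr rfl fun j _ => hM j
      _ = Sv - v i - a := by
          rw [Finset.sum_sub_distrib, Finset.sum_sub_distrib,
            Finset.sum_ite_eq' Finset.univ i v, Finset.sum_ite_eq' Finset.univ i0 v,
            if_pos (Finset.mem_univ i), if_pos (Finset.mem_univ i0)]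
  set c := Sv / (μ + 1) with hcdef
  set d := (Sv - a) / (μ + 1) with hddef
  have hvS : ∀ i : Fin n, 2 ≤ (i : ℕ) → (i : ℕ) < t → v i = c := by
    intro i his hit
    have h1 := hSrow i his hit
    rw [hmu i] at h1
    rw [hcdef]; field_simp; linarith
  have hvT : ∀ i : Fin n, t ≤ (i : ℕ) → v i = d := by
    intro i hit
    have h1 := hTrow i hit
    rw [hmu i] at h1
    rw [hddef]; field_simp; linarith
  set V : ℕ → ℝ := fun j => if h : j < n then v ⟨j, h⟩ else 0 with hVdef
  have hv : ∀ j : Fin n, v j = V (j : ℕ) := by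
    intro j; simp [hVdef, j.isLt]
  have hV0 : V 0 = a := by simp [hVdef, h0n]; rfl
  have hV1 : V 1 = b := by simp [hVdef, h1n]; rfl
  have hVS : ∀ j, 2 ≤ j → j < t → V j = c := by
    intro j hj2 hjt
    have hjn : j < n := by omega
    simp only [hVdef, dif_pos hjn]
    exact hvS ⟨j, hjn⟩ hj2 hjt
  have hVT : ∀ j, t ≤ j → j < n → V j = d := by
    intro j hjt hjn
    simp only [hVdef, dif_pos hjn]
    exact hvT ⟨j, hjn⟩ hjt
  -- the three/four quotient equations
  have eq0 : μ * a = -b + ((t:ℝ) - 2) * c := by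
    have h1 := mulVec_eq_sum (t := t) v V hv i0
    have h2 : ((i0 : Fin n) : ℕ) = 0 := rfl
    rw [h2, row0 h3 htn hV0 hV1 hVS hVT] at h1
    rw [← h1, hmu i0]
  have eq1 : μ * b = -a + ((t:ℝ) - 2) * c + ((n:ℝ) - t) * d := by
    have h1 := mulVec_eq_sum (t := t) v V hv i1
    have h2 : ((i1 : Fin n) : ℕ) = 1 := rfl
    rw [h2, row1 h3 htn hV0 hV1 hVS hVT] at h1
    rw [← h1, hmu i1]
  have eqS : μ * c = a + b + ((t:ℝ) - 3) * c + ((n:ℝ) - t) * d := by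
    have h1 := mulVec_eq_sum (t := t) v V hv i2
    have h2 : ((i2 : Fin n) : ℕ) = 2 := rfl
    rw [h2, rowS h3 htn hV0 hV1 hVS hVT (le_refl 2) (by omega)] at h1
    rw [← h1, hmu i2, hvS i2 (by simp [hi2def]) (by simp [hi2def]; omega)]
  -- nontriviality
  have hnontriv : ¬ (a = 0 ∧ b = 0 ∧ c = 0 ∧ d = 0) := by
    rintro ⟨ha0, hb0, hc0, hd0⟩
    apply hv0
    funext i
    have hcase : (i : ℕ) = 0 ∨ (i : ℕ) = 1 ∨ (2 ≤ (i : ℕ) ∧ (i : ℕ) < t)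
        ∨ t ≤ (i : ℕ) := by have := i.isLt; omega
    have hie : ∀ m : ℕ, (i : ℕ) = m → ∀ h : m < n, i = ⟨m, h⟩ := by
      intro m hm h; exact Fin.ext hm
    rcases hcase with h | h | ⟨hs, hs'⟩ | h
    · rw [hie 0 h h0n]; exact ha0
    · rw [hie 1 h h1n]; exact hb0
    · rw [hvS i hs hs']; exact hc0
    · rw [hvT i h]; exact hd0
  rcases eq_or_lt_of_le htn with htn' | htn'
  · -- t = n
    have hw : (B3 n t μ).mulVec ![a, b, c] = 0 := by
      have hnt : (n:ℝ) - t = 0 := by rw [htn']; ring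
      have hntd : ((n:ℝ) - t) * d = 0 := by rw [hnt]; ring
      funext k
      fin_cases k <;>
        simp [B3, Matrix.mulVec, dotProduct, Fin.sum_univ_three] <;>
        linarith [eq0, eq1, eqS, hntd]
    have hw0 : ![a, b, c] ≠ 0 := by
      intro h
      have h0 := congrFun h 0
      have h1 := congrFun h 1
      have h2 := congrFun h 2
      simp at h0 h1 h2
      -- d is also 0 since T is empty... d = (Sv - a)/(μ+1), but Sv computation:
      apply hnontriv
      refine ⟨h0, h1, h2, ?_⟩
      -- show d = 0 : T class is empty, so show Sv - a = 0 directly? Instead: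
      -- v is zero on all classes except possibly T which is empty, so Sv = a + b + (t-2)c... 
      -- simpler: derive v = 0 directly, contradiction with hv0
      exfalso
      apply hv0
      funext i
      have hcase : (i : ℕ) = 0 ∨ (i : ℕ) = 1 ∨ (2 ≤ (i : ℕ) ∧ (i : ℕ) < t) := by
        have := i.isLt; omega
      rcases hcase with hh | hh | ⟨hs, hs'⟩
      · have : i = i0 := Fin.ext hh
        rw [this]; exact h0
      · have : i = i1 := Fin.ext hh
        rw [this]; exact h1
      · rw [hvS i hs hs']; exact h2
    have hdet : (B3 n t μ).det = 0 :=
      Matrix.exists_mulVec_eq_zero_iff.mp ⟨![a, b, c], hw0, hw⟩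
    rw [detB3 n t htn'] at hdet
    linarith
  · -- t < n
    have eqT : μ * d = b + ((t:ℝ) - 2) * c + ((n:ℝ) - t - 1) * d := by
      set i3 : Fin n := ⟨t, htn'⟩ with hi3def
      have h1 := mulVec_eq_sum (t := t) v V hv i3
      have h2 : ((i3 : Fin n) : ℕ) = t := rfl
      rw [h2, rowT h3 htn hV0 hV1 hVS hVT (le_refl t) htn'] at h1
      rw [← h1, hmu i3, hvT i3 (by simp [hi3def])]
    have hw : (B4 n t μ).mulVec ![a, b, c, d] = 0 := by
      funext k
      fin_cases k <;>
        simp [B4, Matrix.mulVec, dotProduct, Fin.sum_univ_four] <;>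
        linarith [eq0, eq1, eqS, eqT]
    have hw0 : ![a, b, c, d] ≠ 0 := by
      intro h
      have h0 := congrFun h 0
      have h1 := congrFun h 1
      have h2 := congrFun h 2
      have h3' := congrFun h 3
      simp at h0 h1 h2 h3'
      exact hnontriv ⟨h0, h1, h2, h3'⟩
    have hdet : (B4 n t μ).det = 0 :=
      Matrix.exists_mulVec_eq_zero_iff.mp ⟨![a, b, c, d], hw0, hw⟩
    rw [detB4] at hdet
    rcases mul_eq_zero.mp hdet with h | h
    · exact absurd (by linarith) hμ1'
    · exact h

end dirB

section finish
open Polynomial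
variable {n t : ℕ}

lemma Mnt_abs_le (i j : Fin n) : |Mnt n t i j| ≤ 1 := by
  rw [Mnt_apply]; unfold entf; split_ifs <;> norm_num

lemma ESet_bdd (hn : 7 ≤ n) : ∀ μ ∈ ESet n t, μ ≤ (n : ℝ) := by
  intro μ hμ
  obtain ⟨v, hv0, hMv⟩ := hμ
  have h0n : (0:ℕ) < n := by omega
  obtain ⟨i, -, hmax⟩ := Finset.exists_max_image Finset.univ (fun i => |v i|)
    ⟨⟨0, h0n⟩, Finset.mem_univ _⟩
  have hvi : 0 < |v i| := by
    obtain ⟨j, hj⟩ := Function.ne_iff.mp hv0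
    exact lt_of_lt_of_le (abs_pos.mpr hj) (hmax j (Finset.mem_univ j))
  have h1 : μ * v i = ∑ j : Fin n, Mnt n t i j * v j := by
    have := congrFun hMv i
    simp only [Matrix.mulVec, dotProduct, Pi.smul_apply, smul_eq_mul] at this
    rw [← this]
  have h2 : |μ| * |v i| ≤ (n : ℝ) * |v i| := by
    rw [← abs_mul, h1]
    calc |∑ j : Fin n, Mnt n t i j * v j| ≤ ∑ j : Fin n, |Mnt n t i j * v j| :=
          Finset.abs_sum_le_sum_abs _ _
      _ ≤ ∑ _j : Fin n, |v i| := by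
          apply Finset.sum_le_sum
          intro j _
          rw [abs_mul]
          calc |Mnt n t i j| * |v j| ≤ 1 * |v i| :=
                mul_le_mul (Mnt_abs_le i j) (hmax j (Finset.mem_univ j)) (abs_nonneg _)
                  zero_le_one
            _ = |v i| := one_mul _
      _ = (n : ℝ) * |v i| := by
          rw [Finset.sum_const, Finset.card_univ, Fintype.card_fin, nsmul_eq_mul]
  have h3 : |μ| ≤ (n : ℝ) := le_of_mul_le_mul_right h2 hvi
  exact le_trans (le_abs_self μ) h3

lemma exists_root (h3 : 3 ≤ t) (htn : t ≤ n) (hn : 7 ≤ n) :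
    ∃ r : ℝ, gfun n t r = 0 ∧ (n : ℝ) - 3 ≤ r := by
  have hn7 : (7:ℝ) ≤ (n:ℝ) := by exact_mod_cast hn
  have ht3 : (3:ℝ) ≤ (t:ℝ) := by exact_mod_cast h3
  have htn' : (t:ℝ) ≤ (n:ℝ) := by exact_mod_cast htn
  have hab : (n:ℝ) - 3 ≤ 2 * n := by linarith
  have hc : ContinuousOn (gfun n t) (Set.Icc ((n:ℝ) - 3) (2 * n)) := by
    apply Continuous.continuousOn
    unfold gfun
    continuity
  have hga : gfun n t ((n:ℝ) - 3) ≤ 0 := by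
    unfold gfun
    nlinarith [sq_nonneg ((t:ℝ) - 7/2), mul_nonneg (by linarith : (0:ℝ) ≤ (n:ℝ) - 7)
      (by linarith : (0:ℝ) ≤ (n:ℝ) + 2)]
  have hgb : 0 ≤ gfun n t (2 * n) := by
    unfold gfun
    have e1 : (n:ℝ) * t ≤ n * n := by nlinarith
    have e2 : (t:ℝ) * t ≤ n * n := by nlinarith
    nlinarith [e1, e2, pow_pos (by linarith : (0:ℝ) < (n:ℝ)) 3]
  have h0 : (0:ℝ) ∈ Set.Icc (gfun n t ((n:ℝ) - 3)) (gfun n t (2 * n)) := ⟨hga, hgb⟩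
  obtain ⟨r, hrmem, hr0⟩ := intermediate_value_Icc hab hc h0
  exact ⟨r, hr0, hrmem.1⟩

lemma ESet_finite (h3 : 3 ≤ t) (htn : t ≤ n) (hn : 7 ≤ n) : (ESet n t).Finite := by
  set q : Polynomial ℝ :=
    (X + C 1) * (X ^ 3 - C ((n:ℝ) - 3) * X ^ 2 - C ((n:ℝ) + t - 3) * X
      + C (-(t:ℝ) ^ 2 + ((n:ℝ) + 4) * t - n - 7)) with hqdef
  have hm1 : (X + C (1:ℝ)).Monic := monic_X_add_C 1
  have hm2 : (X ^ 3 - C ((n:ℝ) - 3) * X ^ 2 - C ((n:ℝ) + t - 3) * X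
      + C (-(t:ℝ) ^ 2 + ((n:ℝ) + 4) * t - n - 7)).Monic := by
    monicity!
  have hq : q ≠ 0 := (hm1.mul hm2).ne_zero
  have heval : ∀ x : ℝ, q.eval x = (x + 1) * gfun n t x := by
    intro x
    simp only [hqdef, eval_mul, eval_add, eval_sub, eval_pow, eval_X, eval_C, gfun]
    ring
  apply (Polynomial.finite_setOf_isRoot hq).subset
  intro μ hμ
  rcases eigen_dichotomy h3 htn hn μ hμ with h | h
  · show q.IsRoot μ
    rw [Polynomial.IsRoot, heval, h]; ring
  · show q.IsRoot μ
    rw [Polynomial.IsRoot, heval, h]; ring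

end finish

end AUX

theorem lam1_Mnt_largest_root (n t : ℕ) (h3 : 3 ≤ t) (htn : t ≤ n) (hn : 7 ≤ n) :
    (lam1 (Mnt n t)) ^ 3 - ((n : ℝ) - 3) * (lam1 (Mnt n t)) ^ 2
      - ((n : ℝ) + (t : ℝ) - 3) * (lam1 (Mnt n t))
      - (t : ℝ) ^ 2 + ((n : ℝ) + 4) * (t : ℝ) - (n : ℝ) - 7 = 0 ∧
    ∀ x : ℝ,
      x ^ 3 - ((n : ℝ) - 3) * x ^ 2 - ((n : ℝ) + (t : ℝ) - 3) * x
        - (t : ℝ) ^ 2 + ((n : ℝ) + 4) * (t : ℝ) - (n : ℝ) - 7 = 0 →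
      x ≤ lam1 (Mnt n t) := by
  have key1 : lam1 (Mnt n t) = sSup (ESet n t) := rfl
  obtain ⟨r, hr0, hrge⟩ := exists_root h3 htn hn
  have hrE : r ∈ ESet n t := root_mem_ESet h3 htn hn r hr0
  have hbdd : BddAbove (ESet n t) := ⟨(n : ℝ), fun μ hμ => ESet_bdd hn μ hμ⟩
  have hne : (ESet n t).Nonempty := ⟨r, hrE⟩
  have hfin := ESet_finite h3 htn hn
  have hmem : sSup (ESet n t) ∈ ESet n t := hne.csSup_mem hfin
  have hrle : r ≤ sSup (ESet n t) := le_csSup hbdd hrE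
  have hn7 : (7 : ℝ) ≤ (n : ℝ) := by exact_mod_cast hn
  have hne1 : sSup (ESet n t) ≠ -1 := by intro h; rw [h] at hrle; linarith
  have hg : gfun n t (sSup (ESet n t)) = 0 :=
    (eigen_dichotomy h3 htn hn _ hmem).resolve_left hne1
  unfold gfun at hg
  constructor
  · rw [key1]; linarith
  · intro x hx
    have hxg : gfun n t x = 0 := by unfold gfun; linarith
    have hxE : x ∈ ESet n t := root_mem_ESet h3 htn hn x hxg
    rw [key1]
    exact le_csSup hbdd hxE
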